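/- In a convex set X inside a normed space, if P and A are nonempty subsets with the general-position property (no segment between a point of P and a point of A is parallel to a nondegenerate segment in the unit sphere), all distances to P and A attained, and P ∩ A = ∅, then the bisector {x ∈ X : d(x,P) = d(x,A)} has empty interior relative to X (no 'fat bisectors'). -/

import Mathlib

/-- If the endpoints of a segment and one interior point lie on the unit sphere,
the whole segment lies on the unit sphere. -/
lemma seg_sphere_aux {E : Type*} [NormedAddCommGroup E] [NormedSpace ℝ E]
    {u v : E} {t : ℝ} (hu : ‖u‖ = 1) (hv : ‖v‖ = 1) (ht0 : 0 < t) (ht1 : t < 1)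
    (hc : ‖t • u + (1 - t) • v‖ = 1) :
    segment ℝ u v ⊆ Metric.sphere (0 : E) 1 := by
  rintro w ⟨s, s', hs, hs', hss, rfl⟩
  rw [mem_sphere_zero_iff_norm]
  have hle : ‖s • u + s' • v‖ ≤ 1 := by
    calc ‖s • u + s' • v‖ ≤ ‖s • u‖ + ‖s' • v‖ := norm_add_le _ _
      _ = s + s' := by rw [norm_smul, norm_smul, hu, hv, Real.norm_eq_abs, Real.norm_eq_abs, abs_of_nonneg hs,
            abs_of_nonneg hs']; ring
      _ = 1 := hss
  have hge : 1 ≤ ‖s • u + s' • v‖ := by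
    rcases le_or_gt s t with h | h
    · -- s ≤ t, use identity s' • c = (t - s) • u + (1 - t) • (s•u + s'•v)
      have hs'pos : 0 < s' := by linarith
      have key : s' • (t • u + (1 - t) • v) = (t - s) • u + (1 - t) • (s • u + s' • v) := by
        have h1 : s' = 1 - s := by linarith
        rw [h1]; match_scalars <;> ring
      have h2 : ‖s' • (t • u + (1 - t) • v)‖ = s' := by
        rw [norm_smul, hc, Real.norm_eq_abs, abs_of_pos hs'pos, mul_one]
      have h3 : s' ≤ (t - s) + (1 - t) * ‖s • u + s' • v‖ := by
        calc s' = ‖s' • (t • u + (1 - t) • v)‖ := h2.symm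
          _ = ‖(t - s) • u + (1 - t) • (s • u + s' • v)‖ := by rw [key]
          _ ≤ ‖(t - s) • u‖ + ‖(1 - t) • (s • u + s' • v)‖ := norm_add_le _ _
          _ = (t - s) + (1 - t) * ‖s • u + s' • v‖ := by
              rw [norm_smul, norm_smul, hu, Real.norm_eq_abs, Real.norm_eq_abs, abs_of_nonneg (by linarith : (0:ℝ) ≤ t - s),
                abs_of_nonneg (by linarith : (0:ℝ) ≤ 1 - t)]; ring
      nlinarith
    · -- t < s, use identity s • c = t • (s•u + s'•v) + (s - t) • v
      have hspos : 0 < s := lt_trans ht0 h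
      have key : s • (t • u + (1 - t) • v) = t • (s • u + s' • v) + (s - t) • v := by
        have h1 : s' = 1 - s := by linarith
        rw [h1]; match_scalars <;> ring
      have h2 : ‖s • (t • u + (1 - t) • v)‖ = s := by
        rw [norm_smul, hc, Real.norm_eq_abs, abs_of_pos hspos, mul_one]
      have h3 : s ≤ t * ‖s • u + s' • v‖ + (s - t) := by
        calc s = ‖s • (t • u + (1 - t) • v)‖ := h2.symm
          _ = ‖t • (s • u + s' • v) + (s - t) • v‖ := by rw [key]
          _ ≤ ‖t • (s • u + s' • v)‖ + ‖(s - t) • v‖ := norm_add_le _ _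
          _ = t * ‖s • u + s' • v‖ + (s - t) := by
              rw [norm_smul, norm_smul, hv, Real.norm_eq_abs, Real.norm_eq_abs, abs_of_pos ht0,
                abs_of_nonneg (by linarith : (0:ℝ) ≤ s - t)]; ring
      nlinarith
  linarith

set_option maxHeartbeats 1000000 in
theorem bisector_has_empty_interior
    {E : Type*} [NormedAddCommGroup E] [NormedSpace ℝ E]
    (X P A : Set E) (hX : Convex ℝ X) (hPX : P ⊆ X) (hAX : A ⊆ X)
    (hP : P.Nonempty) (hA : A.Nonempty) (hdisj : P ∩ A = ∅)
    (hattP : ∀ x ∈ X, ∃ p ∈ P, Metric.infDist x P = dist x p)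
    (hattA : ∀ x ∈ X, ∃ a ∈ A, Metric.infDist x A = dist x a)
    (hpar : ∀ p ∈ P, ∀ a ∈ A, p ≠ a →
      ¬ ∃ u v : E, u ≠ v ∧ segment ℝ u v ⊆ Metric.sphere (0 : E) 1 ∧
        (‖a - p‖⁻¹ • (a - p) = ‖v - u‖⁻¹ • (v - u) ∨
         ‖a - p‖⁻¹ • (a - p) = -(‖v - u‖⁻¹ • (v - u)))) :
    interior {x : X | Metric.infDist (x : E) P = Metric.infDist (x : E) A} = ∅ := by
  rw [Set.eq_empty_iff_forall_notMem]
  intro x hx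
  have hxS : Metric.infDist (x : E) P = Metric.infDist (x : E) A := by
    have := interior_subset hx; simpa using this
  obtain ⟨ε, hε, hball⟩ := Metric.mem_nhds_iff.mp (mem_interior_iff_mem_nhds.mp hx)
  obtain ⟨p, hp, hxp⟩ := hattP x x.2
  obtain ⟨a, ha, hxa⟩ := hattA x x.2
  set r := Metric.infDist (x : E) P with hr
  have hxar : r = dist (x : E) a := hxS.trans hxa
  have hrpos : 0 < r := by
    rcases (Metric.infDist_nonneg : 0 ≤ r).lt_or_eq with h | h
    · exact h
    · exfalso
      have hxp0 : (x : E) = p := by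
        have : dist (x : E) p = 0 := by rw [← hxp]; exact h.symm
        exact dist_eq_zero.mp this
      have hxa0 : (x : E) = a := by
        have : dist (x : E) a = 0 := by rw [← hxar]; exact h.symm
        exact dist_eq_zero.mp this
      have : p ∈ P ∩ A := ⟨hp, by rw [← hxp0, hxa0]; exact ha⟩
      rw [hdisj] at this
      exact this
  set t := min (1/2 : ℝ) (ε / (2 * r)) with htdef
  have ht0 : 0 < t := lt_min (by norm_num) (by positivity)
  have ht1 : t < 1 := lt_of_le_of_lt (min_le_left _ _) (by norm_num)
  have h1t : 0 < 1 - t := by linarith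
  have htε : t * r < ε := by
    have h1 : t ≤ ε / (2 * r) := min_le_right _ _
    have h2 : t * r ≤ (ε / (2 * r)) * r := by
      exact mul_le_mul_of_nonneg_right h1 hrpos.le
    have h3 : (ε / (2 * r)) * r = ε / 2 := by field_simp
    linarith
  set yv : E := (1 - t) • (x : E) + t • a with hyvdef
  have hyX : yv ∈ X := hX x.2 (hAX ha) (by linarith) ht0.le (by ring)
  have hnorm_ax : ‖a - (x : E)‖ = r := by
    rw [norm_sub_rev, ← dist_eq_norm]; exact hxar.symm
  have hdyx : dist yv (x : E) = t * r := by
    rw [dist_eq_norm]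
    have : yv - (x : E) = t • (a - (x : E)) := by rw [hyvdef]; module
    rw [this, norm_smul, Real.norm_eq_abs, abs_of_pos ht0, hnorm_ax]
  have hyball : (⟨yv, hyX⟩ : X) ∈ Metric.ball x ε := by
    rw [Metric.mem_ball, Subtype.dist_eq]
    calc dist yv (x : E) = t * r := hdyx
      _ < ε := htε
  have hyS : Metric.infDist yv P = Metric.infDist yv A := by
    have h := hball hyball
    simpa using h
  have hdyA : Metric.infDist yv A ≤ (1 - t) * r := by
    calc Metric.infDist yv A ≤ dist yv a := Metric.infDist_le_dist_of_mem ha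
      _ = (1 - t) * r := by
          rw [dist_eq_norm]
          have : yv - a = (1 - t) • ((x : E) - a) := by rw [hyvdef]; module
          rw [this, norm_smul, Real.norm_eq_abs, abs_of_pos h1t, ← dist_eq_norm, ← hxar]
  obtain ⟨q, hq, hyq⟩ := hattP yv hyX
  have hdyq : dist yv q ≤ (1 - t) * r := by
    rw [← hyq, hyS]; exact hdyA
  have hxq : r ≤ dist (x : E) q := Metric.infDist_le_dist_of_mem hq
  have htri : dist (x : E) q ≤ dist (x : E) yv + dist yv q := dist_triangle _ _ _
  have hdxy : dist (x : E) yv = t * r := by rw [dist_comm]; exact hdyx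
  have hyq' : dist yv q = (1 - t) * r := le_antisymm hdyq (by nlinarith)
  have hxq' : dist (x : E) q = r := le_antisymm (by nlinarith) hxq
  have hqa : q ≠ a := by
    intro h
    have : a ∈ P ∩ A := ⟨h ▸ hq, ha⟩
    rw [hdisj] at this; exact this
  set u : E := r⁻¹ • (a - (x : E)) with hudef
  set v : E := ((1 - t) * r)⁻¹ • (q - yv) with hvdef
  have hc1t : (0 : ℝ) < (1 - t) * r := mul_pos h1t hrpos
  have hnorm_qy : ‖q - yv‖ = (1 - t) * r := by
    rw [norm_sub_rev, ← dist_eq_norm]; exact hyq'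
  have hnorm_qx : ‖q - (x : E)‖ = r := by
    rw [norm_sub_rev, ← dist_eq_norm]; exact hxq'
  have hu : ‖u‖ = 1 := by
    rw [hudef, norm_smul, hnorm_ax, Real.norm_eq_abs, abs_of_pos (inv_pos.mpr hrpos),
      inv_mul_cancel₀ hrpos.ne']
  have hv : ‖v‖ = 1 := by
    rw [hvdef, norm_smul, hnorm_qy, Real.norm_eq_abs, abs_of_pos (inv_pos.mpr hc1t),
      inv_mul_cancel₀ hc1t.ne']
  have hkey : t • u + (1 - t) • v = r⁻¹ • (q - (x : E)) := by
    rw [hudef, hvdef, hyvdef]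
    match_scalars <;> field_simp <;> ring
  have hc : ‖t • u + (1 - t) • v‖ = 1 := by
    rw [hkey, norm_smul, hnorm_qx, Real.norm_eq_abs, abs_of_pos (inv_pos.mpr hrpos),
      inv_mul_cancel₀ hrpos.ne']
  have hne : u ≠ v := by
    intro h
    apply hqa
    have h1 : q - yv = ((1 - t) * r) • v := (smul_inv_smul₀ hc1t.ne' _).symm
    rw [← h, hudef] at h1
    have h2 : q = yv + ((1 - t) * r) • (r⁻¹ • (a - (x : E))) :=
      by rw [← h1]; abel
    rw [h2, hyvdef]
    match_scalars <;> field_simp <;> ring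
  have hvu : v - u = ((1 - t) * r)⁻¹ • (q - a) := by
    rw [hudef, hvdef, hyvdef]
    match_scalars <;> field_simp <;> ring
  have hm : (0 : ℝ) < ‖q - a‖ := norm_pos_iff.mpr (sub_ne_zero.mpr hqa)
  have hnvu : ‖v - u‖ = ((1 - t) * r)⁻¹ * ‖q - a‖ := by
    rw [hvu, norm_smul, Real.norm_eq_abs, abs_of_pos (inv_pos.mpr hc1t)]
  have hdir : ‖a - q‖⁻¹ • (a - q) = -(‖v - u‖⁻¹ • (v - u)) := by
    rw [norm_sub_rev, hnvu, hvu]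
    match_scalars <;> field_simp <;> ring
  exact hpar q hq a ha hqa ⟨u, v, hne, seg_sphere_aux hu hv ht0 ht1 hc, Or.inr hdir⟩
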